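/- arXiv:1805.07825 — 3 statements merged into one kernel-verified Lean document; each statement's English description precedes it below -/
import Mathlib

section
/- Combining the two directions: for a real symmetric n×n matrix L with L·𝟙 = 0 and L positive semidefinite, λ₂(L) equals the supremum of all γ ∈ ℝ such that L ⪰ γ·(Iₙ - e₀⊗e₀). -/
open Matrix BigOperators

/-- The second smallest eigenvalue (algebraic connectivity) of a graph Laplacian,
via its variational characterization. -/
noncomputable def lambda2 {n : ℕ} (L : Matrix (Fin n) (Fin n) ℝ) : ℝ :=
  sInf {r : ℝ | ∃ v : Fin n → ℝ, (∑ i, (v i)^2) = 1 ∧ (∑ i, v i) = 0 ∧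
    r = v ⬝ᵥ (L *ᵥ v)}

/-- The normalized all-ones vector `e₀ = 𝟙/√n`. -/
noncomputable def e0 (n : ℕ) : Fin n → ℝ := fun _ => 1 / Real.sqrt n

lemma vecMulVec_mulVec' {n : ℕ} (a b x : Fin n → ℝ) :
    vecMulVec a b *ᵥ x = (b ⬝ᵥ x) • a := by
  ext i
  simp only [mulVec, vecMulVec_apply, dotProduct, Pi.smul_apply, smul_eq_mul,
    Finset.sum_mul]
  apply Finset.sum_congr rfl
  intro j _
  ring

lemma e0_dot {n : ℕ} (x : Fin n → ℝ) : e0 n ⬝ᵥ x = (∑ i, x i) / Real.sqrt n := by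
  rw [dotProduct, Finset.sum_div]
  refine Finset.sum_congr rfl fun i _ => ?_
  rw [e0]; ring

lemma dot_sq_sum {n : ℕ} (x : Fin n → ℝ) : x ⬝ᵥ x = ∑ i, (x i)^2 := by
  simp [dotProduct, sq]

theorem stmt2 {n : ℕ} (hn : 0 < n) (L : Matrix (Fin n) (Fin n) ℝ)
    (hsymm : L.IsSymm) (hpsd : L.PosSemidef)
    (hker : L *ᵥ (fun _ => (1 : ℝ)) = 0) :
    lambda2 L = sSup {γ : ℝ |
      (L - γ • ((1 : Matrix (Fin n) (Fin n) ℝ) - vecMulVec (e0 n) (e0 n))).PosSemidef} := by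
  have hn' : (0:ℝ) < (n:ℝ) := by exact_mod_cast hn
  have hsn : (0:ℝ) < Real.sqrt n := Real.sqrt_pos.2 hn'
  have hnn : Real.sqrt n * Real.sqrt n = (n:ℝ) := Real.mul_self_sqrt hn'.le
  set P : Matrix (Fin n) (Fin n) ℝ :=
    (1 : Matrix (Fin n) (Fin n) ℝ) - vecMulVec (e0 n) (e0 n) with hPdef
  set S : Set ℝ := {r : ℝ | ∃ v : Fin n → ℝ, (∑ i, (v i)^2) = 1 ∧ (∑ i, v i) = 0 ∧
    r = v ⬝ᵥ (L *ᵥ v)} with hSdef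
  set T : Set ℝ := {γ : ℝ | (L - γ • P).PosSemidef} with hTdef
  have hLsym : ∀ i j, L j i = L i j := by
    intro i j
    have := congrFun (congrFun hsymm.eq i) j
    simpa [transpose_apply] using this
  -- quadratic form of L - γ • P
  have hq : ∀ (γ : ℝ) (x : Fin n → ℝ),
      x ⬝ᵥ ((L - γ • P) *ᵥ x)
        = x ⬝ᵥ (L *ᵥ x) - γ * (x ⬝ᵥ x - (e0 n ⬝ᵥ x)^2) := by
    intro γ x
    have h1 : P *ᵥ x = x - (e0 n ⬝ᵥ x) • e0 n := by
      rw [hPdef, sub_mulVec, one_mulVec, vecMulVec_mulVec']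
    rw [sub_mulVec, smul_mulVec, dotProduct_sub, dotProduct_smul, h1,
      dotProduct_sub, dotProduct_smul]
    simp only [smul_eq_mul]
    rw [dotProduct_comm x (e0 n)]
    ring
  -- L kills e0
  have hLe0 : L *ᵥ e0 n = 0 := by
    have he : e0 n = (1 / Real.sqrt n) • (fun _ => (1:ℝ)) := by
      ext i; simp [e0]
    rw [he, mulVec_smul, hker, smul_zero]
  have hvL : ∀ x : Fin n → ℝ, e0 n ⬝ᵥ (L *ᵥ x) = 0 := by
    intro x
    rw [dotProduct_mulVec, ← mulVec_transpose, hsymm.eq, hLe0, zero_dotProduct]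
  have hstar : ∀ x : Fin n → ℝ, star x = x := fun x => rfl
  have hpos : ∀ x : Fin n → ℝ, 0 ≤ x ⬝ᵥ (L *ᵥ x) := by
    intro x
    have := hpsd.dotProduct_mulVec_nonneg x
    rwa [hstar] at this
  rcases lt_or_ge n 2 with hlt | h2
  · -- n = 1
    have hn1 : n = 1 := by omega
    subst hn1
    have hS : S = ∅ := by
      ext r
      simp only [hSdef, Set.mem_setOf_eq, Set.mem_empty_iff_false, iff_false]
      rintro ⟨v, h1, hsum, -⟩
      rw [Fin.sum_univ_one] at h1 hsum
      rw [hsum] at h1; norm_num at h1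
    have hP0 : P = 0 := by
      rw [hPdef]
      ext i j
      have hi : i = 0 := Subsingleton.elim _ _
      have hj : j = 0 := Subsingleton.elim _ _
      subst hi; subst hj
      simp [vecMulVec_apply, e0, Matrix.one_apply]
    have hT : T = Set.univ := by
      ext γ
      simp only [hTdef, Set.mem_setOf_eq, Set.mem_univ, iff_true, hP0,
        smul_zero, sub_zero]
      exact hpsd
    rw [lambda2, ← hSdef, hS, hT, Real.sInf_empty, Real.sSup_univ]
  · -- n ≥ 2
    have hi01 : (⟨0, by omega⟩ : Fin n) ≠ (⟨1, by omega⟩ : Fin n) := by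
      intro h; simpa using congrArg Fin.val h
    set i0 : Fin n := ⟨0, by omega⟩
    set i1 : Fin n := ⟨1, by omega⟩
    have hS_ne : S.Nonempty := by
      set a : ℝ := (Real.sqrt 2)⁻¹ with ha
      have ha2 : a ^ 2 = 2⁻¹ := by
        rw [ha, inv_pow, Real.sq_sqrt (by norm_num : (0:ℝ) ≤ 2)]
      set v : Fin n → ℝ := fun i => if i = i0 then a else if i = i1 then -a else 0 with hv
      refine ⟨v ⬝ᵥ (L *ᵥ v), v, ?_, ?_, rfl⟩
      · have hpt : ∀ i, (v i)^2 = (if i = i0 then a^2 else 0) + (if i = i1 then a^2 else 0) := by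
          intro i
          by_cases h0 : i = i0
          · subst h0; simp [hv, fun h => hi01 h]
          · by_cases hone : i = i1
            · subst hone; simp [hv, h0]
            · simp [hv, h0, hone]
        rw [Finset.sum_congr rfl (fun i _ => hpt i), Finset.sum_add_distrib,
          Finset.sum_ite_eq' Finset.univ i0, Finset.sum_ite_eq' Finset.univ i1]
        simp [ha2]; norm_num
      · have hpt : ∀ i, v i = (if i = i0 then a else 0) + (if i = i1 then -a else 0) := by
          intro i
          by_cases h0 : i = i0
          · subst h0; simp [hv, fun h => hi01 h]
          · by_cases hone : i = i1
            · subst hone; simp [hv, h0]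
            · simp [hv, h0, hone]
        rw [Finset.sum_congr rfl (fun i _ => hpt i), Finset.sum_add_distrib,
          Finset.sum_ite_eq' Finset.univ i0, Finset.sum_ite_eq' Finset.univ i1]
        simp
    have hS_bdd : BddBelow S := by
      refine ⟨0, ?_⟩
      rintro r ⟨v, -, -, rfl⟩
      exact hpos v
    have hTS : ∀ γ ∈ T, ∀ r ∈ S, γ ≤ r := by
      rintro γ hγ r ⟨v, hv1, hv0, rfl⟩
      have h := hγ.dotProduct_mulVec_nonneg v
      rw [hstar, hq] at h
      have hvv : v ⬝ᵥ v = 1 := by rw [dot_sq_sum, hv1]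
      have hev : e0 n ⬝ᵥ v = 0 := by rw [e0_dot, hv0, zero_div]
      rw [hvv, hev] at h
      norm_num at h
      linarith
    have hT0 : (0:ℝ) ∈ T := by
      simp only [hTdef, Set.mem_setOf_eq, zero_smul, sub_zero]
      exact hpsd
    have hT_ne : T.Nonempty := ⟨0, hT0⟩
    obtain ⟨r0, hr0⟩ := hS_ne
    have hT_bdd : BddAbove T := ⟨r0, fun γ hγ => hTS γ hγ r0 hr0⟩
    have hS_ne' : S.Nonempty := ⟨r0, hr0⟩
    have hee : e0 n ⬝ᵥ e0 n = 1 := by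
      rw [e0_dot]
      simp only [e0, Finset.sum_const, Finset.card_univ, Fintype.card_fin, nsmul_eq_mul]
      rw [mul_one_div, div_div, hnn, div_self hn'.ne']
    -- key: sInf S ∈ T
    have hmem : sInf S ∈ T := by
      refine Matrix.PosSemidef.of_dotProduct_mulVec_nonneg ?_ ?_
      · apply IsHermitian.ext
        intro i j
        simp only [Matrix.sub_apply, Matrix.smul_apply, smul_eq_mul, star_trivial]
        rw [hLsym i j, hPdef]
        simp [vecMulVec_apply, mul_comm, Matrix.one_apply, eq_comm]
      · intro x
        rw [hstar, hq]
        set c : ℝ := e0 n ⬝ᵥ x with hc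
        set y : Fin n → ℝ := x - c • e0 n with hy
        have hxy : x = y + c • e0 n := by
          rw [hy, sub_add_cancel]
        have hey : e0 n ⬝ᵥ y = 0 := by
          rw [hy, dotProduct_sub, dotProduct_smul, hee, smul_eq_mul, mul_one, ← hc, sub_self]
        have hysum : ∑ i, y i = 0 := by
          have h := hey
          rw [e0_dot, div_eq_zero_iff] at h
          rcases h with h | h
          · exact h
          · exact absurd h hsn.ne'
        have hxLx : x ⬝ᵥ (L *ᵥ x) = y ⬝ᵥ (L *ᵥ y) := by
          have hLxy : L *ᵥ x = L *ᵥ y := by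
            rw [hxy, mulVec_add, mulVec_smul, hLe0, smul_zero, add_zero]
          rw [hLxy, hxy, add_dotProduct, smul_dotProduct, hvL, smul_zero, add_zero]
        have hyy : y ⬝ᵥ y = x ⬝ᵥ x - c^2 := by
          have h1 : x ⬝ᵥ y = x ⬝ᵥ x - c^2 := by
            rw [hy, dotProduct_sub, dotProduct_smul, dotProduct_comm x (e0 n), ← hc,
              smul_eq_mul, sq]
          have h2 : y ⬝ᵥ y = x ⬝ᵥ y - c * (e0 n ⬝ᵥ y) := by
            rw [hy, sub_dotProduct, smul_dotProduct, smul_eq_mul]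
          rw [h2, hey, mul_zero, sub_zero, h1]
        rw [hxLx, show x ⬝ᵥ x - c^2 = y ⬝ᵥ y from hyy.symm]
        have hyy0 : 0 ≤ y ⬝ᵥ y := by
          rw [dot_sq_sum]
          exact Finset.sum_nonneg fun i _ => sq_nonneg _
        rcases eq_or_lt_of_le hyy0 with hzero | hposy
        · rw [← hzero, mul_zero, sub_zero]
          exact hpos y
        · set t : ℝ := Real.sqrt (y ⬝ᵥ y) with ht
          have ht0 : 0 < t := Real.sqrt_pos.2 hposy
          have ht2 : t * t = y ⬝ᵥ y := Real.mul_self_sqrt hyy0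
          set u : Fin n → ℝ := t⁻¹ • y with hu
          have hu1 : ∑ i, (u i)^2 = 1 := by
            simp only [hu, Pi.smul_apply, smul_eq_mul, mul_pow]
            rw [← Finset.mul_sum, ← dot_sq_sum, ← ht2]
            have : t⁻¹ ^ 2 * (t * t) = (t⁻¹ * t) * (t⁻¹ * t) := by ring
            rw [this, inv_mul_cancel₀ ht0.ne', one_mul]
          have hu0 : ∑ i, u i = 0 := by
            simp only [hu, Pi.smul_apply, smul_eq_mul]
            rw [← Finset.mul_sum, hysum, mul_zero]
          have huL : u ⬝ᵥ (L *ᵥ u) = t⁻¹ * t⁻¹ * (y ⬝ᵥ (L *ᵥ y)) := by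
            rw [hu, mulVec_smul, smul_dotProduct, dotProduct_smul]
            simp [mul_assoc]
          have hmemS : u ⬝ᵥ (L *ᵥ u) ∈ S := ⟨u, hu1, hu0, rfl⟩
          have hle : sInf S ≤ u ⬝ᵥ (L *ᵥ u) := csInf_le hS_bdd hmemS
          rw [huL] at hle
          have hmul := mul_le_mul_of_nonneg_right hle hyy0
          have hinv : t⁻¹ * t⁻¹ * (y ⬝ᵥ y) = 1 := by
            rw [← ht2]
            have h3 : t⁻¹ * t⁻¹ * (t * t) = (t⁻¹ * t) * (t⁻¹ * t) := by ring
            rw [h3, inv_mul_cancel₀ ht0.ne', one_mul]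
          have heq : t⁻¹ * t⁻¹ * (y ⬝ᵥ (L *ᵥ y)) * (y ⬝ᵥ y) = y ⬝ᵥ (L *ᵥ y) := by
            calc t⁻¹ * t⁻¹ * (y ⬝ᵥ (L *ᵥ y)) * (y ⬝ᵥ y)
                = (t⁻¹ * t⁻¹ * (y ⬝ᵥ y)) * (y ⬝ᵥ (L *ᵥ y)) := by ring
              _ = y ⬝ᵥ (L *ᵥ y) := by rw [hinv, one_mul]
          linarith [hmul]
    rw [lambda2, ← hSdef]
    exact le_antisymm (le_csSup hT_bdd hmem)
      (csSup_le hT_ne fun γ hγ => le_csInf hS_ne' fun r hr => hTS γ hγ r hr)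
end

section
/- Let Γ be a finite set of 0/1 edge-selection vectors, and for each x ∈ Γ let v_x be a Fiedler vector of L(x) (a unit eigenvector for λ₂(L(x)) orthogonal to 𝟙). Consider the relaxed problem maximizing γ subject to v_y · L(x) v_y ≥ γ for all y ∈ Γ, over x ∈ Γ. Then the optimal value of this relaxed problem equals max_{x∈Γ} λ₂(L(x)). -/
open Matrix BigOperators

lemma quad_bddBelow {n : ℕ} (L : Matrix (Fin n) (Fin n) ℝ) :
    BddBelow {r : ℝ | ∃ v : Fin n → ℝ, (∑ i, (v i)^2) = 1 ∧ (∑ i, v i) = 0 ∧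
      r = v ⬝ᵥ (L *ᵥ v)} := by
  refine ⟨-(∑ i, ∑ j, |L i j|), ?_⟩
  rintro r ⟨v, hv1, hv0, rfl⟩
  have hvi : ∀ i, |v i| ≤ 1 := by
    intro i
    have h1 : (v i)^2 ≤ 1 := by
      rw [← hv1]
      exact Finset.single_le_sum (f := fun j => (v j)^2)
        (fun j _ => sq_nonneg _) (Finset.mem_univ i)
    nlinarith [abs_nonneg (v i), sq_abs (v i)]
  have hrw : v ⬝ᵥ (L.mulVec v) = ∑ i, ∑ j, v i * (L i j * v j) := by
    simp [dotProduct, Matrix.mulVec, Finset.mul_sum]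
  rw [hrw]
  have hterm : ∀ i j : Fin n, -|L i j| ≤ v i * (L i j * v j) := by
    intro i j
    have h1 : |v i * (L i j * v j)| ≤ |L i j| := by
      rw [abs_mul, abs_mul]
      have h2 : |L i j| * |v j| ≤ |L i j| := by
        nlinarith [abs_nonneg (L i j), hvi j, abs_nonneg (v j)]
      have h3 : |v i| * (|L i j| * |v j|) ≤ |L i j| * |v j| := by
        nlinarith [mul_nonneg (abs_nonneg (L i j)) (abs_nonneg (v j)), hvi i,
          abs_nonneg (v i)]
      linarith
    have := neg_abs_le (v i * (L i j * v j))
    linarith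
  calc -(∑ i, ∑ j, |L i j|) = ∑ i, ∑ j, -|L i j| := by simp
    _ ≤ ∑ i, ∑ j, v i * (L i j * v j) :=
        Finset.sum_le_sum (fun i _ => Finset.sum_le_sum (fun j _ => hterm i j))

/-- The local (edge) Laplacian `w_e (e_i - e_j) ⊗ (e_i - e_j)` of an edge `{i,j}`. -/
noncomputable def edgeLap {n : ℕ} (w : ℝ) (i j : Fin n) : Matrix (Fin n) (Fin n) ℝ :=
  w • vecMulVec (Pi.single i 1 - Pi.single j 1) (Pi.single i 1 - Pi.single j 1)

/-- The weighted Laplacian of the subgraph selected by the edge variables `x`. -/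
noncomputable def Lap {n : ℕ} (E : Finset (Fin n × Fin n)) (w : Fin n × Fin n → ℝ)
    (x : Fin n × Fin n → ℝ) : Matrix (Fin n) (Fin n) ℝ :=
  ∑ e ∈ E, x e • edgeLap (w e) e.1 e.2

/-- The Fiedler-vector MILP formulation is exact: relaxing the semidefinite
constraint to the finitely many linear inequalities given by the Fiedler vectors
of all feasible solutions preserves the optimal value `max_{x ∈ Γ} λ₂(L(x))`. -/
theorem stmt6 {n : ℕ} (hn : 0 < n) (E : Finset (Fin n × Fin n))
    (w : Fin n × Fin n → ℝ)
    (Γ : Finset ((Fin n × Fin n) → ℝ)) (hΓ : Γ.Nonempty)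
    (hbin : ∀ x ∈ Γ, ∀ e, x e = 0 ∨ x e = 1)
    (v : ((Fin n × Fin n) → ℝ) → (Fin n → ℝ))
    (hFiedler : ∀ x ∈ Γ, (∑ i, (v x i)^2) = 1 ∧ (∑ i, v x i) = 0 ∧
      (Lap E w x) *ᵥ (v x) = lambda2 (Lap E w x) • (v x)) :
    sSup {γ : ℝ | ∃ x ∈ Γ, ∀ y ∈ Γ, γ ≤ (v y) ⬝ᵥ ((Lap E w x) *ᵥ (v y))}
      = sSup {r : ℝ | ∃ x ∈ Γ, r = lambda2 (Lap E w x)} := by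
  set A := {γ : ℝ | ∃ x ∈ Γ, ∀ y ∈ Γ, γ ≤ (v y) ⬝ᵥ ((Lap E w x) *ᵥ (v y))} with hA
  set B := {r : ℝ | ∃ x ∈ Γ, r = lambda2 (Lap E w x)} with hB
  -- λ₂(L x) lower-bounds every Fiedler quadratic form
  have key : ∀ x ∈ Γ, ∀ y ∈ Γ,
      lambda2 (Lap E w x) ≤ (v y) ⬝ᵥ ((Lap E w x) *ᵥ (v y)) := by
    intro x hx y hy
    exact csInf_le (quad_bddBelow _)
      ⟨v y, (hFiedler y hy).1, (hFiedler y hy).2.1, rfl⟩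
  -- the Fiedler vector attains λ₂
  have eig : ∀ x ∈ Γ, (v x) ⬝ᵥ ((Lap E w x) *ᵥ (v x)) = lambda2 (Lap E w x) := by
    intro x hx
    rw [(hFiedler x hx).2.2]
    have hvv : (v x) ⬝ᵥ (v x) = 1 := by
      simp only [dotProduct, ← sq]
      exact (hFiedler x hx).1
    rw [dotProduct_smul, smul_eq_mul, hvv, mul_one]
  obtain ⟨x₀, hx₀⟩ := hΓ
  have hBsubA : B ⊆ A := by
    rintro r ⟨x, hx, rfl⟩
    exact ⟨x, hx, fun y hy => key x hx y hy⟩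
  have hB_ne : B.Nonempty := ⟨lambda2 (Lap E w x₀), x₀, hx₀, rfl⟩
  have hA_ne : A.Nonempty := ⟨_, hBsubA hB_ne.choose_spec⟩
  -- upper bound
  have hΓim : (Γ.image (fun x => lambda2 (Lap E w x))).Nonempty :=
    ⟨_, Finset.mem_image_of_mem _ hx₀⟩
  set m := (Γ.image (fun x => lambda2 (Lap E w x))).max' hΓim with hm
  have hA_bdd : BddAbove A := by
    refine ⟨m, ?_⟩
    rintro γ ⟨x, hx, hg⟩
    have h1 : γ ≤ lambda2 (Lap E w x) := by
      have := hg x hx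
      rw [eig x hx] at this
      exact this
    have h2 : lambda2 (Lap E w x) ≤ m :=
      Finset.le_max' _ _ (Finset.mem_image_of_mem (fun x => lambda2 (Lap E w x)) hx)
    exact h1.trans h2
  have hB_bdd : BddAbove B := hA_bdd.mono hBsubA
  apply le_antisymm
  · apply csSup_le hA_ne
    rintro γ ⟨x, hx, hg⟩
    have h1 : γ ≤ lambda2 (Lap E w x) := by
      have := hg x hx
      rw [eig x hx] at this
      exact this
    exact h1.trans (le_csSup hB_bdd ⟨x, hx, rfl⟩)
  · exact csSup_le_csSup hA_bdd hB_ne hBsubA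
end

section
/- Minimum power placement: let L be a symmetric positive semidefinite n×n matrix with L𝟙 = 0 and eigenvalues 0 = λ₁ ≤ λ₂ ≤ λ₃ ≤ ... Consider the minimization of a·La + b·Lb + c·Lc over vectors a, b, c ∈ ℝⁿ subject to 𝟙·a = 0, 𝟙·b = 0, a·b = 0, a·a ≥ R², b·b ≥ R². The minimum value is R²(λ₂(L) + λ₃(L)) (taking c ∈ span(𝟙)). -/
open Matrix BigOperators

/-- The third smallest eigenvalue, via the Courant–Fischer max-min
characterization: the supremum over pairs `u₁, u₂` of the infimum of the
quadratic form over unit vectors orthogonal to both. -/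
noncomputable def lambda3 {n : ℕ} (L : Matrix (Fin n) (Fin n) ℝ) : ℝ :=
  sSup {r : ℝ | ∃ u₁ u₂ : Fin n → ℝ,
    r = sInf {q : ℝ | ∃ v : Fin n → ℝ, (∑ i, (v i)^2) = 1 ∧
      v ⬝ᵥ u₁ = 0 ∧ v ⬝ᵥ u₂ = 0 ∧ q = v ⬝ᵥ (L *ᵥ v)}}

namespace Stmt12Helpers

variable {n : ℕ}

lemma dot_self_nonneg' (x : Fin n → ℝ) : 0 ≤ x ⬝ᵥ x :=
  Finset.sum_nonneg fun _ _ => mul_self_nonneg _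

lemma eq_zero_of_dot_self (x : Fin n → ℝ) (h : x ⬝ᵥ x = 0) : x = 0 := by
  funext i
  have := (Finset.sum_eq_zero_iff_of_nonneg
    (fun i _ => mul_self_nonneg (x i))).mp h i (Finset.mem_univ i)
  simpa [mul_self_eq_zero] using this

lemma dot_self_pos (x : Fin n → ℝ) (h : x ≠ 0) : 0 < x ⬝ᵥ x := by
  rcases (dot_self_nonneg' x).lt_or_eq with h' | h'
  · exact h'
  · exact absurd (eq_zero_of_dot_self x h'.symm) h

lemma sumsq_eq_dot (x : Fin n → ℝ) : (∑ i, (x i)^2) = x ⬝ᵥ x := by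
  simp [dotProduct, sq]

lemma symm_dot (L : Matrix (Fin n) (Fin n) ℝ) (h : L.IsSymm) (x y : Fin n → ℝ) :
    x ⬝ᵥ (L *ᵥ y) = y ⬝ᵥ (L *ᵥ x) := by
  nth_rewrite 1 [dotProduct_mulVec, ← h, vecMul_transpose]
  exact dotProduct_comm _ _

lemma smul_quad (L : Matrix (Fin n) (Fin n) ℝ) (t : ℝ) (x : Fin n → ℝ) :
    (t • x) ⬝ᵥ (L *ᵥ (t • x)) = t^2 * (x ⬝ᵥ (L *ᵥ x)) := by
  simp [mulVec_smul, smul_dotProduct, dotProduct_smul, sq]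
  ring

lemma quad_expand (L : Matrix (Fin n) (Fin n) ℝ) (x y : Fin n → ℝ) (s t : ℝ) :
    (s•x + t•y) ⬝ᵥ (L *ᵥ (s•x + t•y)) =
      s^2*(x ⬝ᵥ (L *ᵥ x)) + s*t*(x ⬝ᵥ (L *ᵥ y)) + s*t*(y ⬝ᵥ (L *ᵥ x))
        + t^2*(y ⬝ᵥ (L *ᵥ y)) := by
  simp [mulVec_add, mulVec_smul, dotProduct_add, add_dotProduct, dotProduct_smul,
    smul_dotProduct]
  ring

lemma cont_quad (L : Matrix (Fin n) (Fin n) ℝ) :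
    Continuous fun v : Fin n → ℝ => v ⬝ᵥ (L *ᵥ v) := by
  simp only [dotProduct, mulVec]
  exact continuous_finset_sum _ fun i _ => (continuous_apply i).mul
    (continuous_finset_sum _ fun j _ => continuous_const.mul (continuous_apply j))

lemma cont_sum : Continuous fun v : Fin n → ℝ => ∑ i, v i :=
  continuous_finset_sum _ fun i _ => continuous_apply i

lemma cont_sumsq : Continuous fun v : Fin n → ℝ => ∑ i, (v i)^2 :=
  continuous_finset_sum _ fun i _ => (continuous_apply i).pow 2

lemma cont_dot (u : Fin n → ℝ) : Continuous fun v : Fin n → ℝ => v ⬝ᵥ u :=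
  continuous_finset_sum _ fun i _ => (continuous_apply i).mul continuous_const

lemma exists_min (f : (Fin n → ℝ) → ℝ) (hf : Continuous f) (K : Set (Fin n → ℝ))
    (hc : IsClosed K) (hb : ∀ v ∈ K, (∑ i, (v i)^2) = 1) (hne : K.Nonempty) :
    ∃ x ∈ K, ∀ y ∈ K, f x ≤ f y := by
  have hK : IsCompact K := by
    rw [Metric.isCompact_iff_isClosed_bounded]
    refine ⟨hc, Bornology.IsBounded.subset (Metric.isBounded_closedBall (x := 0) (r := 1)) ?_⟩
    intro v hv
    simp only [Metric.mem_closedBall]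
    rw [dist_pi_le_iff (by norm_num)]
    intro i
    have h1 : (v i)^2 ≤ 1 := by
      rw [← hb v hv]
      exact Finset.single_le_sum (fun j _ => sq_nonneg (v j)) (Finset.mem_univ i)
    rw [Real.dist_eq]
    simp only [Pi.zero_apply, sub_zero]
    rw [abs_le]; constructor <;> nlinarith
  obtain ⟨x, hx, hmin⟩ := hK.exists_isMinOn hne hf.continuousOn
  exact ⟨x, hx, fun y hy => hmin hy⟩

lemma unit_of_normalize (w : Fin n → ℝ) (hw : w ≠ 0) :
    (∑ i, ((((Real.sqrt (w ⬝ᵥ w))⁻¹ • w)) i)^2) = 1 := by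
  have hp := dot_self_pos w hw
  have hs : Real.sqrt (w ⬝ᵥ w) > 0 := Real.sqrt_pos.mpr hp
  rw [sumsq_eq_dot]
  simp only [smul_dotProduct, dotProduct_smul, smul_eq_mul]
  rw [← mul_assoc, ← Real.sqrt_inv]
  rw [show (Real.sqrt (w ⬝ᵥ w)⁻¹) * (Real.sqrt (w ⬝ᵥ w)⁻¹) = (w ⬝ᵥ w)⁻¹ from
    Real.mul_self_sqrt (by positivity)]
  field_simp

lemma smul_sq_norm (w : Fin n → ℝ) (t : ℝ) : (t • w) ⬝ᵥ (t • w) = t^2 * (w ⬝ᵥ w) := by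
  simp [smul_dotProduct, dotProduct_smul, sq]; ring

end Stmt12Helpers

open Stmt12Helpers

set_option maxHeartbeats 2000000 in
/-- Minimum power placement: the minimum of `a·La + b·Lb + c·Lc` over
`𝟙·a = 0`, `𝟙·b = 0`, `a·b = 0`, `a·a ≥ R²`, `b·b ≥ R²` equals
`R²(λ₂(L) + λ₃(L))`. -/
theorem stmt12 {n : ℕ} (hn : 3 ≤ n) (L : Matrix (Fin n) (Fin n) ℝ)
    (hsymm : L.IsSymm) (hpsd : L.PosSemidef)
    (hker : L *ᵥ (fun _ => (1 : ℝ)) = 0)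
    (hconn : 0 < lambda2 L) (R : ℝ) (hR : 0 < R) :
    IsLeast {P : ℝ | ∃ a b c : Fin n → ℝ,
        (∑ i, a i) = 0 ∧ (∑ i, b i) = 0 ∧ a ⬝ᵥ b = 0 ∧
        R^2 ≤ a ⬝ᵥ a ∧ R^2 ≤ b ⬝ᵥ b ∧
        P = a ⬝ᵥ (L *ᵥ a) + b ⬝ᵥ (L *ᵥ b) + c ⬝ᵥ (L *ᵥ c)}
      (R^2 * (lambda2 L + lambda3 L)) := by
  classical
  set f : (Fin n → ℝ) → ℝ := fun v => v ⬝ᵥ (L *ᵥ v) with hf_def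
  have f_apply : ∀ v : Fin n → ℝ, f v = v ⬝ᵥ (L *ᵥ v) := fun _ => rfl
  clear_value f
  have hf0 : ∀ v, 0 ≤ f v := fun v => by
    have := hpsd.dotProduct_mulVec_nonneg v; simpa [f_apply] using this
  have hsym : ∀ x y : Fin n → ℝ, x ⬝ᵥ (L *ᵥ y) = y ⬝ᵥ (L *ᵥ x) := symm_dot L hsymm
  -- the sphere-with-mean-zero set, its minimizer v₂
  set K₂ : Set (Fin n → ℝ) := {v | (∑ i, (v i)^2) = 1 ∧ (∑ i, v i) = 0} with hK₂def
  have hK₂c : IsClosed K₂ :=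
    (isClosed_eq cont_sumsq continuous_const).inter (isClosed_eq cont_sum continuous_const)
  -- K₂ nonempty
  have hK₂ne : K₂.Nonempty := by
    have h01 : (⟨0, by omega⟩ : Fin n) ≠ ⟨1, by omega⟩ := by simp [Fin.ext_iff]
    set w : Fin n → ℝ := Pi.single ⟨0, by omega⟩ 1 - Pi.single ⟨1, by omega⟩ 1 with hw_def
    have hwne : w ≠ 0 := by
      intro h
      have := congrFun h ⟨0, by omega⟩
      simp [hw_def, Pi.single_eq_same, Pi.single_eq_of_ne h01.symm] at this
    have hwsum : (∑ i, w i) = 0 := by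
      simp [hw_def, Finset.sum_sub_distrib, Finset.sum_pi_single']
    refine ⟨(Real.sqrt (w ⬝ᵥ w))⁻¹ • w, unit_of_normalize w hwne, ?_⟩
    simp only [Pi.smul_apply, smul_eq_mul]
    rw [← Finset.mul_sum, hwsum, mul_zero]
  obtain ⟨v₂, hv₂K, hv₂min⟩ := exists_min f (hf_def ▸ cont_quad L) K₂ hK₂c (fun v hv => hv.1) hK₂ne
  have hv₂unit : (∑ i, (v₂ i)^2) = 1 := hv₂K.1
  have hv₂sum : (∑ i, v₂ i) = 0 := hv₂K.2
  have hv₂dot : v₂ ⬝ᵥ v₂ = 1 := by rw [← sumsq_eq_dot]; exact hv₂unit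
  set μ₂ : ℝ := f v₂ with hμ₂def
  have hμ₂f : μ₂ = v₂ ⬝ᵥ (L *ᵥ v₂) := hμ₂def.trans (f_apply v₂)
  clear_value μ₂
  have hμ₂0 : 0 ≤ μ₂ := by rw [hμ₂def]; exact hf0 v₂
  -- scaling inequality for μ₂
  have hscale₂ : ∀ a : Fin n → ℝ, (∑ i, a i) = 0 → μ₂ * (a ⬝ᵥ a) ≤ f a := by
    intro a ha
    by_cases h0 : a = 0
    · simp [h0, f_apply]
    · have hp := dot_self_pos a h0
      set t : ℝ := (Real.sqrt (a ⬝ᵥ a))⁻¹ with ht_def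
      have ht2 : t^2 * (a ⬝ᵥ a) = 1 := by
        have := unit_of_normalize a h0
        rw [sumsq_eq_dot, smul_sq_norm] at this
        exact this
      have hmem : t • a ∈ K₂ := by
        refine ⟨unit_of_normalize a h0, ?_⟩
        simp only [Pi.smul_apply, smul_eq_mul]
        rw [← Finset.mul_sum, ha, mul_zero]
      have h1 := hv₂min (t • a) hmem
      rw [f_apply, smul_quad] at h1
      have h3 : t^2 * (a ⬝ᵥ (L *ᵥ a)) * (a ⬝ᵥ a) = (a ⬝ᵥ (L *ᵥ a)) * (t^2 * (a ⬝ᵥ a)) := by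
        ring
      have h4 := mul_le_mul_of_nonneg_right h1 hp.le
      rw [h3, ht2, mul_one] at h4
      rw [f_apply]
      linarith
  -- K₃ and minimizer v₃
  set K₃ : Set (Fin n → ℝ) :=
    {v | (∑ i, (v i)^2) = 1 ∧ (∑ i, v i) = 0 ∧ v ⬝ᵥ v₂ = 0} with hK₃def
  have hK₃c : IsClosed K₃ :=
    (isClosed_eq cont_sumsq continuous_const).inter
      ((isClosed_eq cont_sum continuous_const).inter
        (isClosed_eq (cont_dot v₂) continuous_const))
  have hK₃ne : K₃.Nonempty := by
    set M : Matrix (Fin 2) (Fin n) ℝ := Matrix.of ![(fun _ => (1:ℝ)), v₂] with hM_def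
    have hker2 : LinearMap.ker M.mulVecLin ≠ ⊥ := by
      intro h
      have hi := LinearMap.ker_eq_bot.mp h
      have := LinearMap.finrank_le_finrank_of_injective hi
      simp at this
      omega
    obtain ⟨w, hwmem, hwne⟩ := Submodule.exists_mem_ne_zero_of_ne_bot hker2
    have hw0 : M *ᵥ w = 0 := hwmem
    have hwsum : (∑ i, w i) = 0 := by
      have := congrFun hw0 0
      simpa [hM_def, mulVec, dotProduct] using this
    have hwperp : w ⬝ᵥ v₂ = 0 := by
      have := congrFun hw0 1
      rw [dotProduct_comm]
      simpa [hM_def, mulVec, dotProduct] using this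
    refine ⟨(Real.sqrt (w ⬝ᵥ w))⁻¹ • w, unit_of_normalize w hwne, ?_, ?_⟩
    · simp only [Pi.smul_apply, smul_eq_mul]
      rw [← Finset.mul_sum, hwsum, mul_zero]
    · rw [smul_dotProduct, hwperp, smul_zero]
  obtain ⟨v₃, hv₃K, hv₃min⟩ := exists_min f (hf_def ▸ cont_quad L) K₃ hK₃c (fun v hv => hv.1) hK₃ne
  have hv₃unit : (∑ i, (v₃ i)^2) = 1 := hv₃K.1
  have hv₃sum : (∑ i, v₃ i) = 0 := hv₃K.2.1
  have hv₃perp : v₃ ⬝ᵥ v₂ = 0 := hv₃K.2.2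
  have hv₃dot : v₃ ⬝ᵥ v₃ = 1 := by rw [← sumsq_eq_dot]; exact hv₃unit
  set μ₃ : ℝ := f v₃ with hμ₃def
  have hμ₃f : μ₃ = v₃ ⬝ᵥ (L *ᵥ v₃) := hμ₃def.trans (f_apply v₃)
  clear_value μ₃
  have hμ₂₃ : μ₂ ≤ μ₃ := by rw [hμ₃def]; exact hv₂min v₃ ⟨hv₃unit, hv₃sum⟩
  have hμ₃0 : 0 ≤ μ₃ := le_trans hμ₂0 hμ₂₃
  have hscale₃ : ∀ a : Fin n → ℝ, (∑ i, a i) = 0 → a ⬝ᵥ v₂ = 0 → μ₃ * (a ⬝ᵥ a) ≤ f a := by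
    intro a ha hap
    by_cases h0 : a = 0
    · simp [h0, f_apply]
    · have hp := dot_self_pos a h0
      set t : ℝ := (Real.sqrt (a ⬝ᵥ a))⁻¹ with ht_def
      have ht2 : t^2 * (a ⬝ᵥ a) = 1 := by
        have := unit_of_normalize a h0
        rw [sumsq_eq_dot, smul_sq_norm] at this
        exact this
      have hmem : t • a ∈ K₃ := by
        refine ⟨unit_of_normalize a h0, ?_, ?_⟩
        · simp only [Pi.smul_apply, smul_eq_mul]
          rw [← Finset.mul_sum, ha, mul_zero]
        · rw [smul_dotProduct, hap, smul_zero]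
      have h1 := hv₃min (t • a) hmem
      rw [f_apply, smul_quad] at h1
      have h4 := mul_le_mul_of_nonneg_right h1 hp.le
      have h3 : t^2 * (a ⬝ᵥ (L *ᵥ a)) * (a ⬝ᵥ a) = (a ⬝ᵥ (L *ᵥ a)) * (t^2 * (a ⬝ᵥ a)) := by
        ring
      rw [h3, ht2, mul_one] at h4
      rw [f_apply]
      linarith
  -- first order condition for the minimizer v₂
  have hfo : ∀ w : Fin n → ℝ, (∑ i, w i) = 0 → w ⬝ᵥ v₂ = 0 → v₂ ⬝ᵥ (L *ᵥ w) = 0 := by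
    intro w hwsum hwperp
    set s : ℝ := v₂ ⬝ᵥ (L *ᵥ w) with hs_def
    set q : ℝ := w ⬝ᵥ (L *ᵥ w) with hq_def
    set m : ℝ := w ⬝ᵥ w with hm_def
    have hkey : ∀ t : ℝ, 0 ≤ 2*t*s + t^2*(q - μ₂*m) := by
      intro t
      have hxsum : (∑ i, (v₂ + t • w) i) = 0 := by
        simp only [Pi.add_apply, Pi.smul_apply, smul_eq_mul]
        rw [Finset.sum_add_distrib, ← Finset.mul_sum, hwsum, hv₂sum, mul_zero, add_zero]
      have h1 := hscale₂ (v₂ + t • w) hxsum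
      have hq1 : f (v₂ + t • w) = μ₂ + 2*t*s + t^2*q := by
        rw [f_apply]
        have he := quad_expand L v₂ w 1 t
        simp only [one_smul] at he
        rw [he, hsym w v₂]
        rw [hμ₂def, f_apply]
        ring
      have hxx : (v₂ + t • w) ⬝ᵥ (v₂ + t • w) = 1 + t^2*m := by
        have hcomm : v₂ ⬝ᵥ w = 0 := by rw [dotProduct_comm]; exact hwperp
        simp only [dotProduct_add, add_dotProduct, dotProduct_smul, smul_dotProduct,
          smul_eq_mul, hv₂dot, hcomm, hwperp]
        rw [← hm_def]
        ring
      rw [hq1, hxx] at h1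
      linarith [h1]
    by_contra hs
    set C : ℝ := q - μ₂*m with hC_def
    have hD : (0:ℝ) < |C| + 1 := by positivity
    set d : ℝ := (|C| + 1)⁻¹ with hd_def
    have hd : 0 < d := by positivity
    have hdC : d * C ≤ 1 := by
      have h1 : d * C ≤ d * (|C|+1) :=
        mul_le_mul_of_nonneg_left (by linarith [le_abs_self C] : C ≤ |C|+1) hd.le
      have h2 : d * (|C|+1) = 1 := inv_mul_cancel₀ hD.ne'
      linarith
    have hs2 : 0 < s^2 := by positivity
    have hk := hkey (-(s*d))
    have hprod := mul_le_mul_of_nonneg_left hdC (mul_pos hs2 hd).le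
    have hsd := mul_pos hs2 hd
    linarith [hk, hsd, hprod]
  have hcross : v₂ ⬝ᵥ (L *ᵥ v₃) = 0 := hfo v₃ hv₃sum hv₃perp
  have hcross' : v₃ ⬝ᵥ (L *ᵥ v₂) = 0 := by rw [hsym]; exact hcross
  -- lambda2 L = μ₂
  have hL2 : lambda2 L = μ₂ := by
    unfold lambda2
    apply le_antisymm
    · exact csInf_le ⟨0, by rintro r ⟨v, h1, h2, rfl⟩; exact f_apply v ▸ hf0 v⟩
        ⟨v₂, hv₂unit, hv₂sum, hμ₂f⟩
    · refine le_csInf ⟨μ₂, v₂, hv₂unit, hv₂sum, hμ₂f⟩ ?_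
      rintro r ⟨v, h1, h2, rfl⟩
      exact f_apply v ▸ hv₂min v ⟨h1, h2⟩
  -- lambda3 L = μ₃
  have hones_dot : ∀ v : Fin n → ℝ, v ⬝ᵥ (fun _ => (1:ℝ)) = ∑ i, v i := by
    intro v; simp [dotProduct]
  have hL3 : lambda3 L = μ₃ := by
    unfold lambda3
    have hbound : ∀ r ∈ {r : ℝ | ∃ u₁ u₂ : Fin n → ℝ,
        r = sInf {q : ℝ | ∃ v : Fin n → ℝ, (∑ i, (v i)^2) = 1 ∧
          v ⬝ᵥ u₁ = 0 ∧ v ⬝ᵥ u₂ = 0 ∧ q = v ⬝ᵥ (L *ᵥ v)}}, r ≤ μ₃ := by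
      rintro r ⟨u₁, u₂, rfl⟩
      -- build a nonzero combination of 𝟙, v₂, v₃ orthogonal to u₁, u₂
      set ones : Fin n → ℝ := fun _ => (1:ℝ) with hones_def
      set M : Matrix (Fin 2) (Fin 3) ℝ :=
        Matrix.of ![![ones ⬝ᵥ u₁, v₂ ⬝ᵥ u₁, v₃ ⬝ᵥ u₁],
                    ![ones ⬝ᵥ u₂, v₂ ⬝ᵥ u₂, v₃ ⬝ᵥ u₂]] with hM_def
      have hker2 : LinearMap.ker M.mulVecLin ≠ ⊥ := by
        intro h
        have hi := LinearMap.ker_eq_bot.mp h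
        have := LinearMap.finrank_le_finrank_of_injective hi
        simp at this
      obtain ⟨c, hcmem, hcne⟩ := Submodule.exists_mem_ne_zero_of_ne_bot hker2
      have hc0 : M *ᵥ c = 0 := hcmem
      set x : Fin n → ℝ := c 0 • ones + c 1 • v₂ + c 2 • v₃ with hx_def
      have hrow0 := congrFun hc0 0
      have hrow1 := congrFun hc0 1
      simp only [hM_def, mulVec, dotProduct, Matrix.of_apply, Fin.sum_univ_three,
        Matrix.cons_val_zero, Matrix.cons_val_one, Matrix.head_cons, Pi.zero_apply,
        Matrix.cons_val_two, Matrix.tail_cons] at hrow0 hrow1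
      have hx1 : x ⬝ᵥ u₁ = 0 := by
        simp only [hx_def, add_dotProduct, smul_dotProduct, smul_eq_mul]
        simp only [dotProduct] at hrow0 ⊢
        linarith [hrow0]
      have hx2 : x ⬝ᵥ u₂ = 0 := by
        simp only [hx_def, add_dotProduct, smul_dotProduct, smul_eq_mul]
        simp only [dotProduct] at hrow1 ⊢
        linarith [hrow1]
      have honesones : ones ⬝ᵥ ones = (n:ℝ) := by simp [hones_def, dotProduct]
      have honesv₂ : ones ⬝ᵥ v₂ = 0 := by
        rw [dotProduct_comm, hones_dot]; exact hv₂sum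
      have honesv₃ : ones ⬝ᵥ v₃ = 0 := by
        rw [dotProduct_comm, hones_dot]; exact hv₃sum
      have hv₂ones : v₂ ⬝ᵥ ones = 0 := by rw [hones_dot]; exact hv₂sum
      have hv₃ones : v₃ ⬝ᵥ ones = 0 := by rw [hones_dot]; exact hv₃sum
      have hv₂v₃ : v₂ ⬝ᵥ v₃ = 0 := by rw [dotProduct_comm]; exact hv₃perp
      have hxx : x ⬝ᵥ x = (n:ℝ) * (c 0)^2 + (c 1)^2 + (c 2)^2 := by
        simp only [hx_def, dotProduct_add, add_dotProduct, dotProduct_smul,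
          smul_dotProduct, smul_eq_mul, honesones, honesv₂, honesv₃, hv₂ones, hv₃ones,
          hv₂v₃, hv₃perp, hv₂dot, hv₃dot]
        ring
      have hn3 : (3:ℝ) ≤ (n:ℝ) := by exact_mod_cast hn
      have hn0 : (0:ℝ) < (n:ℝ) := by linarith
      have hxpos : 0 < x ⬝ᵥ x := by
        have hcn : c 0 ≠ 0 ∨ c 1 ≠ 0 ∨ c 2 ≠ 0 := by
          by_contra h
          push_neg at h
          apply hcne
          funext j
          fin_cases j <;> simp [h.1, h.2.1, h.2.2]
        rw [hxx]
        have h00 : (0:ℝ) ≤ (n:ℝ) * (c 0)^2 := by positivity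
        rcases hcn with h | h | h
        · have h1 : 0 < (c 0)^2 := pow_two_pos_of_ne_zero h
          have h2 : 0 < (n:ℝ) * (c 0)^2 := mul_pos hn0 h1
          linarith [sq_nonneg (c 1), sq_nonneg (c 2)]
        · have h1 : 0 < (c 1)^2 := pow_two_pos_of_ne_zero h
          linarith [sq_nonneg (c 2), mul_nonneg hn0.le (sq_nonneg (c 0))]
        · have h1 : 0 < (c 2)^2 := pow_two_pos_of_ne_zero h
          linarith [sq_nonneg (c 1), mul_nonneg hn0.le (sq_nonneg (c 0))]
      have hxne : x ≠ 0 := by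
        intro h
        rw [h] at hxpos
        simp at hxpos
      have hLx : x ⬝ᵥ (L *ᵥ x) = (c 1)^2 * μ₂ + (c 2)^2 * μ₃ := by
        have hLx' : L *ᵥ x = c 1 • (L *ᵥ v₂) + c 2 • (L *ᵥ v₃) := by
          rw [hx_def]
          rw [mulVec_add, mulVec_add, mulVec_smul, mulVec_smul, mulVec_smul, hker]
          simp
        rw [hLx']
        have honesLv₂ : ones ⬝ᵥ (L *ᵥ v₂) = 0 := by
          rw [hsym]; rw [show L *ᵥ ones = 0 from hker]; simp
        have honesLv₃ : ones ⬝ᵥ (L *ᵥ v₃) = 0 := by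
          rw [hsym]; rw [show L *ᵥ ones = 0 from hker]; simp
        simp only [hx_def, dotProduct_add, add_dotProduct, dotProduct_smul,
          smul_dotProduct, smul_eq_mul, honesLv₂, honesLv₃, hcross, hcross']
        rw [hμ₂def, hμ₃def, f_apply, f_apply]
        ring
      set t : ℝ := (Real.sqrt (x ⬝ᵥ x))⁻¹ with ht_def
      have ht2 : t^2 * (x ⬝ᵥ x) = 1 := by
        have := unit_of_normalize x hxne
        rw [sumsq_eq_dot, smul_sq_norm] at this
        exact this
      have hmem : f (t • x) ∈ {q : ℝ | ∃ v : Fin n → ℝ, (∑ i, (v i)^2) = 1 ∧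
          v ⬝ᵥ u₁ = 0 ∧ v ⬝ᵥ u₂ = 0 ∧ q = v ⬝ᵥ (L *ᵥ v)} := by
        refine ⟨t • x, unit_of_normalize x hxne, ?_, ?_, (f_apply _)⟩
        · rw [smul_dotProduct, hx1, smul_zero]
        · rw [smul_dotProduct, hx2, smul_zero]
      have hval : f (t • x) ≤ μ₃ := by
        rw [f_apply, smul_quad, hLx]
        have hle : (c 1)^2*μ₂ + (c 2)^2*μ₃ ≤ (x ⬝ᵥ x)*μ₃ := by
          rw [hxx]
          linarith [mul_le_mul_of_nonneg_left hμ₂₃ (sq_nonneg (c 1)),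
            mul_nonneg (mul_nonneg hn0.le (sq_nonneg (c 0))) hμ₃0,
            mul_nonneg (sq_nonneg (c 2)) hμ₃0]
        have ht0 : 0 ≤ t^2 := sq_nonneg t
        have := mul_le_mul_of_nonneg_left hle ht0
        have heq : t^2 * ((x ⬝ᵥ x)*μ₃) = μ₃ := by
          rw [← mul_assoc, ht2, one_mul]
        linarith
      refine le_trans (csInf_le ?_ hmem) hval
      exact ⟨0, by rintro q ⟨v, _, _, _, rfl⟩; exact f_apply v ▸ hf0 v⟩
    have hmemT : μ₃ ∈ {r : ℝ | ∃ u₁ u₂ : Fin n → ℝ,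
        r = sInf {q : ℝ | ∃ v : Fin n → ℝ, (∑ i, (v i)^2) = 1 ∧
          v ⬝ᵥ u₁ = 0 ∧ v ⬝ᵥ u₂ = 0 ∧ q = v ⬝ᵥ (L *ᵥ v)}} := by
      refine ⟨(fun _ => (1:ℝ)), v₂, ?_⟩
      apply le_antisymm
      · refine le_csInf ⟨μ₃, v₃, hv₃unit, by rw [hones_dot]; exact hv₃sum, hv₃perp, hμ₃f⟩ ?_
        rintro q ⟨v, h1, h2, h3, rfl⟩
        rw [hones_dot] at h2
        exact f_apply v ▸ hv₃min v ⟨h1, h2, h3⟩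
      · exact csInf_le ⟨0, by rintro q ⟨v, _, _, _, rfl⟩; exact f_apply v ▸ hf0 v⟩
          ⟨v₃, hv₃unit, by rw [hones_dot]; exact hv₃sum, hv₃perp, hμ₃f⟩
    apply le_antisymm
    · exact csSup_le ⟨μ₃, hmemT⟩ hbound
    · exact le_csSup ⟨μ₃, hbound⟩ hmemT
  rw [hL2, hL3]
  constructor
  · -- membership
    refine ⟨R • v₂, R • v₃, 0, ?_, ?_, ?_, ?_, ?_, ?_⟩
    · simp only [Pi.smul_apply, smul_eq_mul]
      rw [← Finset.mul_sum, hv₂sum, mul_zero]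
    · simp only [Pi.smul_apply, smul_eq_mul]
      rw [← Finset.mul_sum, hv₃sum, mul_zero]
    · rw [smul_dotProduct, dotProduct_smul, dotProduct_comm, hv₃perp]
      simp
    · rw [smul_sq_norm, hv₂dot, mul_one]
    · rw [smul_sq_norm, hv₃dot, mul_one]
    · rw [smul_quad, smul_quad]
      have h0 : (0 : Fin n → ℝ) ⬝ᵥ (L *ᵥ 0) = 0 := by simp
      rw [h0, hμ₂def, hμ₃def, f_apply, f_apply]
      ring
  · -- lower bound
    rintro P ⟨a, b, c, hasum, hbsum, habd, haa, hbb, rfl⟩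
    have hR2 : (0:ℝ) < R^2 := by positivity
    have hα0 : 0 < a ⬝ᵥ a := lt_of_lt_of_le hR2 haa
    have hβ0 : 0 < b ⬝ᵥ b := lt_of_lt_of_le hR2 hbb
    set p : ℝ := a ⬝ᵥ v₂ with hp_def
    set qq : ℝ := b ⬝ᵥ v₂ with hqq_def
    set α : ℝ := a ⬝ᵥ a with hα_def
    set β : ℝ := b ⬝ᵥ b with hβ_def
    have hva : v₂ ⬝ᵥ a = p := by rw [dotProduct_comm]
    have hvb : v₂ ⬝ᵥ b = qq := by rw [dotProduct_comm]
    -- bound f a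
    have hbnd : ∀ (u : Fin n → ℝ), (∑ i, u i) = 0 →
        μ₂ * (u ⬝ᵥ v₂)^2 + μ₃ * ((u ⬝ᵥ u) - (u ⬝ᵥ v₂)^2) ≤ u ⬝ᵥ (L *ᵥ u) := by
      intro u husum
      set pu : ℝ := u ⬝ᵥ v₂ with hpu_def
      set u' : Fin n → ℝ := u - pu • v₂ with hu'_def
      have hu'sum : (∑ i, u' i) = 0 := by
        simp only [hu'_def, Pi.sub_apply, Pi.smul_apply, smul_eq_mul]
        rw [Finset.sum_sub_distrib, ← Finset.mul_sum, hv₂sum, mul_zero, husum, sub_zero]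
      have hu'perp : u' ⬝ᵥ v₂ = 0 := by
        simp only [hu'_def, sub_dotProduct, smul_dotProduct, smul_eq_mul, hv₂dot]
        rw [← hpu_def]; ring
      have hu'u' : u' ⬝ᵥ u' = (u ⬝ᵥ u) - pu^2 := by
        have hcomm : v₂ ⬝ᵥ u = pu := by rw [dotProduct_comm]
        simp only [hu'_def, dotProduct_sub, sub_dotProduct, dotProduct_smul,
          smul_dotProduct, smul_eq_mul, hv₂dot, hcomm]
        rw [← hpu_def]
        ring
      have hcross2 : v₂ ⬝ᵥ (L *ᵥ u') = 0 := hfo u' hu'sum hu'perp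
      have hcross2' : u' ⬝ᵥ (L *ᵥ v₂) = 0 := by rw [hsym]; exact hcross2
      have hudecomp : u = u' + pu • v₂ := by
        rw [hu'_def]; abel
      have hfu : u ⬝ᵥ (L *ᵥ u) = u' ⬝ᵥ (L *ᵥ u') + pu^2 * μ₂ := by
        conv_lhs => rw [hudecomp]
        have he := quad_expand L u' v₂ 1 pu
        simp only [one_smul] at he
        rw [he, hcross2, hcross2']
        rw [hμ₂def, f_apply]
        ring
      have hlow := hscale₃ u' hu'sum hu'perp
      rw [f_apply, hu'u'] at hlow
      rw [hfu]
      linarith [hlow]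
    have hba := hbnd a hasum
    have hbb' := hbnd b hbsum
    rw [← hp_def, ← hα_def] at hba
    rw [← hqq_def, ← hβ_def] at hbb'
    have hc0 : 0 ≤ c ⬝ᵥ (L *ᵥ c) := by
      have := hf0 c; rwa [f_apply] at this
    -- Bessel inequality
    have hbes : β * p^2 + α * qq^2 ≤ α * β := by
      set w : Fin n → ℝ := (α*β) • v₂ - (β*p) • a - (α*qq) • b with hw_def
      have hw0 : 0 ≤ w ⬝ᵥ w := dot_self_nonneg' w
      have hba2 : b ⬝ᵥ a = 0 := by rw [dotProduct_comm]; exact habd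
      have hww : w ⬝ᵥ w = α^2*β^2 - α*β^2*p^2 - α^2*β*qq^2 := by
        simp only [hw_def, dotProduct_sub, sub_dotProduct, dotProduct_smul,
          smul_dotProduct, smul_eq_mul, hv₂dot, hva, hvb, hba2, habd,
          ← hp_def, ← hqq_def, ← hα_def, ← hβ_def]
        ring
      clear_value w
      rw [hww] at hw0
      have hw0' : (α*β) * 0 ≤ (α*β) * (α*β - β*p^2 - α*qq^2) := by
        ring_nf
        ring_nf at hw0
        linarith [hw0]
      have := le_of_mul_le_mul_left hw0' (mul_pos hα0 hβ0)
      linarith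
    set t₁ : ℝ := p^2/α with ht₁_def
    set t₂ : ℝ := qq^2/β with ht₂_def
    have ht₁α : t₁ * α = p^2 := div_mul_cancel₀ _ hα0.ne'
    have ht₂β : t₂ * β = qq^2 := div_mul_cancel₀ _ hβ0.ne'
    have ht₁0 : 0 ≤ t₁ := div_nonneg (sq_nonneg p) hα0.le
    have ht₂0 : 0 ≤ t₂ := div_nonneg (sq_nonneg qq) hβ0.le
    have htsum : t₁ + t₂ ≤ 1 := by
      rw [ht₁_def, ht₂_def, div_add_div _ _ hα0.ne' hβ0.ne',
        div_le_one (mul_pos hα0 hβ0)]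
      linarith [hbes]
    clear_value t₁ t₂
    have ht₁1 : t₁ ≤ 1 := by linarith
    have ht₂1 : t₂ ≤ 1 := by linarith
    have hcoefa : 0 ≤ μ₃ - t₁*(μ₃-μ₂) := by
      have := mul_nonneg (by linarith : (0:ℝ) ≤ 1 - t₁) (sub_nonneg.2 hμ₂₃)
      linarith [this, hμ₂0, mul_nonneg ht₁0 hμ₂0]
    have hcoefb : 0 ≤ μ₃ - t₂*(μ₃-μ₂) := by
      have := mul_nonneg (by linarith : (0:ℝ) ≤ 1 - t₂) (sub_nonneg.2 hμ₂₃)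
      linarith [this, hμ₂0, mul_nonneg ht₂0 hμ₂0]
    have e1 : α*(μ₃ - t₁*(μ₃-μ₂)) = μ₂*p^2 + μ₃*(α - p^2) := by
      rw [← ht₁α]; ring
    have e2 : β*(μ₃ - t₂*(μ₃-μ₂)) = μ₂*qq^2 + μ₃*(β - qq^2) := by
      rw [← ht₂β]; ring
    have h1 : α*(μ₃ - t₁*(μ₃-μ₂)) ≤ a ⬝ᵥ (L *ᵥ a) := by rw [e1]; exact hba
    have h2 : β*(μ₃ - t₂*(μ₃-μ₂)) ≤ b ⬝ᵥ (L *ᵥ b) := by rw [e2]; exact hbb'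
    have h1' : R^2*(μ₃ - t₁*(μ₃-μ₂)) ≤ α*(μ₃ - t₁*(μ₃-μ₂)) :=
      mul_le_mul_of_nonneg_right haa hcoefa
    have h2' : R^2*(μ₃ - t₂*(μ₃-μ₂)) ≤ β*(μ₃ - t₂*(μ₃-μ₂)) :=
      mul_le_mul_of_nonneg_right hbb hcoefb
    have h3 : 0 ≤ R^2*((μ₃-μ₂)*(1 - (t₁+t₂))) :=
      mul_nonneg hR2.le (mul_nonneg (sub_nonneg.2 hμ₂₃) (by linarith))
    linarith [h1, h2, h1', h2', h3, hc0]
end
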